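/- Let π₀(z) ∝ ‖z‖_∞^{−k₁}‖z‖₂^{−k₂} exp(−‖z‖₂²/(2σ²)) with k₁, k₂ ≥ 0 and σ > 0 (assumed integrable), and define D(δ) = ∫ (λπ₀(z) − π₀(z−δ))₊ dz for λ ≥ 0. Then for each coordinate i, sgn(δ_i)·∂D/∂δ_i ≥ 0; that is, D is nondecreasing in |δ_i| in each coordinate. -/

import Mathlib

open MeasureTheory

private lemma min_ineq' {A B p q : ℝ} (hBA : B ≤ A) (hpq : p ≤ q) :
    min A p + min B q ≤ min A q + min B p := by
  simp only [min_def]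
  split_ifs <;> linarith

private lemma abs_helper' {t c : ℝ} (hc : 0 ≤ c) (h : 2 * t ≤ c) : |t| ≤ |c - t| := by
  rcases le_total 0 t with ht | ht
  · rw [abs_of_nonneg ht, abs_of_nonneg (by linarith)]; linarith
  · rw [abs_of_nonpos ht, abs_of_nonneg (by linarith)]; linarith

private lemma mp_pi' {ι : Type*} [Fintype ι] {α : ι → Type*} [∀ i, MeasurableSpace (α i)]
    (μ : ∀ i, Measure (α i)) [∀ i, SigmaFinite (μ i)] (F : ∀ i, α i → α i)
    (hF : ∀ i, MeasurePreserving (F i) (μ i) (μ i)) :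
    MeasurePreserving (fun x j => F j (x j)) (Measure.pi μ) (Measure.pi μ) := by
  have hmeas : Measurable fun (x : ∀ i, α i) j => F j (x j) :=
    measurable_pi_lambda _ fun j => ((hF j).measurable).comp (measurable_pi_apply j)
  refine ⟨hmeas, ?_⟩
  refine (Measure.pi_eq fun s hs => ?_).symm
  rw [Measure.map_apply hmeas (MeasurableSet.univ_pi hs)]
  have hpre : (fun (x : ∀ i, α i) j => F j (x j)) ⁻¹' Set.pi Set.univ s
      = Set.pi Set.univ fun j => F j ⁻¹' s j := by
    ext x; simp [Set.mem_pi]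
  rw [hpre, Measure.pi_pi]
  exact Finset.prod_congr rfl fun j _ =>
    (hF j).measure_preimage (hs j).nullMeasurableSet

/-- For the mixed-norm smoothing density
`π₀(z) ∝ ‖z‖_∞^{-k₁} ‖z‖₂^{-k₂} exp(-‖z‖₂²/(2σ²))`, the discrepancy
`D(δ) = ∫ (λπ₀(z) - π₀(z-δ))₊ dz` is nondecreasing in `|δᵢ|` in each coordinate. -/
theorem stmt_14 {d : ℕ} (k₁ k₂ σ : ℝ) (hk₁ : 0 ≤ k₁) (hk₂ : 0 ≤ k₂) (hσ : 0 < σ)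
    (C : ℝ) (hC : 0 < C)
    (π₀ : (Fin d → ℝ) → ℝ)
    (hπ₀ : π₀ = fun z =>
      C * ‖z‖ ^ (-k₁) * Real.sqrt (∑ i, z i ^ 2) ^ (-k₂) *
        Real.exp (-(∑ i, z i ^ 2) / (2 * σ ^ 2)))
    (hint : Integrable π₀) (hprob : ∫ z, π₀ z = 1)
    (lam : ℝ) (hlam : 0 ≤ lam)
    (D : (Fin d → ℝ) → ℝ)
    (hD : D = fun δ => ∫ z, max (lam * π₀ z - π₀ (z - δ)) 0) :
    ∀ (i : Fin d) (δ δ' : Fin d → ℝ), (∀ j, j ≠ i → δ j = δ' j) →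
      0 ≤ δ i → δ i ≤ δ' i → D δ ≤ D δ' := by
  intro i δ δ' hoff h0 hle
  classical
  haveI : Nonempty (Fin d) := ⟨i⟩
  -- Evenness of π₀ in coordinate i
  have Epar : ∀ u v : Fin d → ℝ, (∀ j, j ≠ i → u j = v j) → u i = -(v i) → π₀ u = π₀ v := by
    intro u v huv hui
    have habs : |u i| = |v i| := by rw [hui, abs_neg]
    have hsum : ∑ j, u j ^ 2 = ∑ j, v j ^ 2 :=
      Finset.sum_congr rfl fun j _ => by
        by_cases hj : j = i
        · subst hj; rw [hui]; ring
        · rw [huv j hj]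
    have hnorm : ‖u‖ = ‖v‖ := by
      apply le_antisymm
      · refine (pi_norm_le_iff_of_nonneg (norm_nonneg v)).mpr fun j => ?_
        by_cases hj : j = i
        · subst hj
          calc ‖u j‖ = ‖v j‖ := by simpa [Real.norm_eq_abs] using habs
            _ ≤ ‖v‖ := norm_le_pi_norm v j
        · rw [huv j hj]; exact norm_le_pi_norm v j
      · refine (pi_norm_le_iff_of_nonneg (norm_nonneg u)).mpr fun j => ?_
        by_cases hj : j = i
        · subst hj
          calc ‖v j‖ = ‖u j‖ := by simpa [Real.norm_eq_abs] using habs.symm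
            _ ≤ ‖u‖ := norm_le_pi_norm u j
        · rw [← huv j hj]; exact norm_le_pi_norm u j
    rw [hπ₀]; dsimp only; rw [hsum, hnorm]
  -- Monotonicity of π₀ in |coordinate i|
  have Mono : ∀ u v : Fin d → ℝ, (∀ j, j ≠ i → u j = v j) → |u i| ≤ |v i| → u ≠ 0 →
      π₀ v ≤ π₀ u := by
    intro u v huv habs hu
    have hsum : ∑ j, u j ^ 2 ≤ ∑ j, v j ^ 2 := by
      apply Finset.sum_le_sum
      intro j _
      by_cases hj : j = i
      · subst hj
        calc u j ^ 2 = |u j| ^ 2 := (sq_abs _).symm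
          _ ≤ |v j| ^ 2 := pow_le_pow_left₀ (abs_nonneg _) habs 2
          _ = v j ^ 2 := sq_abs _
      · rw [huv j hj]
    have hnorm : ‖u‖ ≤ ‖v‖ := by
      refine (pi_norm_le_iff_of_nonneg (norm_nonneg v)).mpr fun j => ?_
      by_cases hj : j = i
      · subst hj
        calc ‖u j‖ = |u j| := Real.norm_eq_abs _
          _ ≤ |v j| := habs
          _ = ‖v j‖ := (Real.norm_eq_abs _).symm
          _ ≤ ‖v‖ := norm_le_pi_norm v j
      · rw [huv j hj]; exact norm_le_pi_norm v j
    have hupos : 0 < ‖u‖ := norm_pos_iff.mpr hu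
    have hSu : 0 < ∑ j, u j ^ 2 := by
      obtain ⟨j, hj⟩ := Function.ne_iff.mp hu
      have hj' : u j ≠ 0 := by simpa using hj
      refine Finset.sum_pos' (fun k _ => sq_nonneg _) ⟨j, Finset.mem_univ j, by positivity⟩
    have h1 : ‖v‖ ^ (-k₁) ≤ ‖u‖ ^ (-k₁) :=
      Real.rpow_le_rpow_of_nonpos hupos hnorm (neg_nonpos.mpr hk₁)
    have h2 : Real.sqrt (∑ j, v j ^ 2) ^ (-k₂) ≤ Real.sqrt (∑ j, u j ^ 2) ^ (-k₂) :=
      Real.rpow_le_rpow_of_nonpos (Real.sqrt_pos.mpr hSu) (Real.sqrt_le_sqrt hsum)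
        (neg_nonpos.mpr hk₂)
    have h3 : Real.exp (-(∑ j, v j ^ 2) / (2 * σ ^ 2)) ≤
        Real.exp (-(∑ j, u j ^ 2) / (2 * σ ^ 2)) := by
      apply Real.exp_le_exp.mpr
      have hden : (0:ℝ) < 2 * σ ^ 2 := by positivity
      exact (div_le_div_iff_of_pos_right hden).mpr (by linarith)
    rw [hπ₀]; dsimp only
    have hn1 : 0 ≤ C * ‖u‖ ^ (-k₁) :=
      mul_nonneg hC.le (Real.rpow_nonneg (norm_nonneg _) _)
    have hn2 : 0 ≤ Real.sqrt (∑ j, v j ^ 2) ^ (-k₂) :=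
      Real.rpow_nonneg (Real.sqrt_nonneg _) _
    exact mul_le_mul
      (mul_le_mul (mul_le_mul_of_nonneg_left h1 hC.le) h2 hn2 hn1)
      h3 (Real.exp_pos _).le
      (mul_nonneg hn1 (Real.rpow_nonneg (Real.sqrt_nonneg _) _))
  -- the reflection R in coordinate i about (δ i + δ' i)/2
  set R : (Fin d → ℝ) → (Fin d → ℝ) := fun x => Function.update x i (δ i + δ' i - x i) with hRdef
  have hRR : ∀ x, R (R x) = x := by
    intro x; funext j
    by_cases hj : j = i
    · subst hj; simp [hRdef, Function.update_self]
    · simp [hRdef, Function.update_of_ne hj]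
  have hF : ∀ j : Fin d, MeasurePreserving
      (fun t : ℝ => if j = i then δ i + δ' i - t else t) volume volume := by
    intro j
    by_cases hj : j = i
    · simpa [hj] using Measure.measurePreserving_sub_left (volume : Measure ℝ) (δ i + δ' i)
    · simp only [hj, if_false]; exact MeasurePreserving.id (volume : Measure ℝ)
  have hRF : R = fun x j => (fun t : ℝ => if j = i then δ i + δ' i - t else t) (x j) := by
    funext x j
    simp only [hRdef, Function.update_apply]
    by_cases hj : j = i
    · subst hj; simp
    · simp [hj]
  have hR : MeasurePreserving R volume volume := by
    rw [hRF]
    have := mp_pi' (fun _ : Fin d => (volume : Measure ℝ))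
      (fun j t => if j = i then δ i + δ' i - t else t) hF
    simpa [← volume_pi] using this
  let e : (Fin d → ℝ) ≃ᵐ (Fin d → ℝ) :=
    { toFun := R, invFun := R, left_inv := hRR, right_inv := hRR,
      measurable_toFun := hR.measurable, measurable_invFun := hR.measurable }
  have hRemb : MeasurableEmbedding R := e.measurableEmbedding
  -- integrability of translates
  have hsub : ∀ c : Fin d → ℝ, Integrable fun x : Fin d → ℝ => π₀ (x - c) := by
    intro c
    have h := measurePreserving_sub_right (volume : Measure (Fin d → ℝ)) c
    exact (h.integrable_comp_emb (MeasurableEquiv.subRight c).measurableEmbedding).mpr hint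
  have hg : Integrable fun z : Fin d → ℝ => lam * π₀ z := hint.const_mul lam
  -- rewrite D in terms of the overlap integral
  have key : ∀ c : Fin d → ℝ,
      Integrable (fun z : Fin d → ℝ => min (lam * π₀ z) (π₀ (z - c))) ∧
      (∫ z, max (lam * π₀ z - π₀ (z - c)) 0)
        = lam - ∫ z, min (lam * π₀ z) (π₀ (z - c)) := by
    intro c
    have hfc : Integrable fun z : Fin d → ℝ => π₀ (z - c) := hsub c
    have hppt : ∀ z : Fin d → ℝ, max (lam * π₀ z - π₀ (z - c)) 0
        = lam * π₀ z - min (lam * π₀ z) (π₀ (z - c)) := by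
      intro z
      rcases le_total (lam * π₀ z) (π₀ (z - c)) with h | h
      · rw [min_eq_left h, max_eq_right (by linarith)]; ring
      · rw [min_eq_right h, max_eq_left (by linarith)]
    have hmin : Integrable (fun z : Fin d → ℝ => min (lam * π₀ z) (π₀ (z - c))) := by
      have heq : (fun z : Fin d → ℝ => min (lam * π₀ z) (π₀ (z - c)))
          = fun z => lam * π₀ z - max (lam * π₀ z - π₀ (z - c)) 0 :=
        funext fun z => by rw [hppt z]; ring
      rw [heq]
      exact hg.sub (hg.sub hfc).pos_part
    refine ⟨hmin, ?_⟩
    calc (∫ z, max (lam * π₀ z - π₀ (z - c)) 0)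
        = ∫ z, (lam * π₀ z - min (lam * π₀ z) (π₀ (z - c))) := by simp only [hppt]
      _ = (∫ z, lam * π₀ z) - ∫ z, min (lam * π₀ z) (π₀ (z - c)) := integral_sub hg hmin
      _ = lam - ∫ z, min (lam * π₀ z) (π₀ (z - c)) := by
          rw [integral_const_mul, hprob, mul_one]
  -- a.e. avoidance of the finitely many bad points
  have hane : ∀ p : Fin d → ℝ, ∀ᵐ x : Fin d → ℝ, x ≠ p := by
    intro p
    refine ae_iff.mpr ?_
    simpa [not_not] using measure_singleton (μ := (volume : Measure (Fin d → ℝ))) p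
  have hR0 : R (0 : Fin d → ℝ) = Function.update (0 : Fin d → ℝ) i (δ i + δ' i) := by
    simp [hRdef]
  -- the key pointwise (a.e.) inequality
  have hae : (fun x => min (lam * π₀ x) (π₀ (x - δ')) + min (lam * π₀ (R x)) (π₀ (R x - δ')))
      ≤ᵐ[(volume : Measure (Fin d → ℝ))]
      fun x => min (lam * π₀ x) (π₀ (x - δ)) + min (lam * π₀ (R x)) (π₀ (R x - δ)) := by
    filter_upwards [hane 0, hane δ, hane δ',
      hane (Function.update (0 : Fin d → ℝ) i (δ i + δ' i))] with x hx0 hxδ hxδ' hxR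
    set y := R x with hy
    have hyj : ∀ j, j ≠ i → y j = x j := fun j hj => Function.update_of_ne hj _ _
    have hyi : y i = δ i + δ' i - x i := Function.update_self _ _ _
    have hy0 : y ≠ 0 := by
      intro h
      apply hxR
      rw [← hRR x, ← hy, h, hR0]
    have heq1 : π₀ (y - δ') = π₀ (x - δ) := by
      apply Epar
      · intro j hj
        simp only [Pi.sub_apply, hyj j hj, hoff j hj]
      · simp only [Pi.sub_apply, hyi]; ring
    have heq2 : π₀ (y - δ) = π₀ (x - δ') := by
      apply Epar
      · intro j hj
        simp only [Pi.sub_apply, hyj j hj, hoff j hj]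
      · simp only [Pi.sub_apply, hyi]; ring
    rcases le_total (2 * x i) (δ i + δ' i) with hc | hc
    · have habs1 : |x i| ≤ |y i| := by
        rw [hyi]; exact abs_helper' (by linarith) (by linarith)
      have hA : lam * π₀ y ≤ lam * π₀ x :=
        mul_le_mul_of_nonneg_left (Mono x y (fun j hj => (hyj j hj).symm) habs1 hx0) hlam
      have habs2 : |(x - δ) i| ≤ |(x - δ') i| := by
        have h' := abs_helper' (t := x i - δ i) (c := δ' i - δ i) (by linarith) (by linarith)
        have : δ' i - δ i - (x i - δ i) = -(x i - δ' i) := by ring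
        rw [this, abs_neg] at h'
        simpa [Pi.sub_apply] using h'
      have hq : π₀ (x - δ') ≤ π₀ (x - δ) := by
        refine Mono (x - δ) (x - δ') (fun j hj => by simp [Pi.sub_apply, hoff j hj]) habs2 ?_
        exact sub_ne_zero_of_ne hxδ
      rw [heq1, heq2]
      exact min_ineq' hA hq
    · have habs1 : |y i| ≤ |x i| := by
        rw [hyi]
        have h' := abs_helper' (t := δ i + δ' i - x i) (c := δ i + δ' i)
          (by linarith) (by linarith)
        have : δ i + δ' i - (δ i + δ' i - x i) = x i := by ring
        rwa [this] at h'
      have hA : lam * π₀ x ≤ lam * π₀ y :=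
        mul_le_mul_of_nonneg_left (Mono y x hyj habs1 hy0) hlam
      have habs2 : |(x - δ') i| ≤ |(x - δ) i| := by
        have h' := abs_helper' (t := δ' i - x i) (c := δ' i - δ i) (by linarith) (by linarith)
        have h1 : δ' i - δ i - (δ' i - x i) = x i - δ i := by ring
        rw [h1] at h'
        have h2 : |δ' i - x i| = |x i - δ' i| := abs_sub_comm _ _
        rw [h2] at h'
        simpa [Pi.sub_apply] using h'
      have hp : π₀ (x - δ) ≤ π₀ (x - δ') := by
        refine Mono (x - δ') (x - δ) (fun j hj => by simp [Pi.sub_apply, hoff j hj]) habs2 ?_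
        exact sub_ne_zero_of_ne hxδ'
      rw [heq1, heq2]
      have := min_ineq' (A := lam * π₀ y) (B := lam * π₀ x)
        (p := π₀ (x - δ)) (q := π₀ (x - δ')) hA hp
      linarith
  -- integrate the pointwise inequality
  have hcomp : Integrable fun x : Fin d → ℝ => min (lam * π₀ (R x)) (π₀ (R x - δ)) := by
    exact (hR.integrable_comp_emb hRemb).mpr (key δ).1
  have hcomp' : Integrable fun x : Fin d → ℝ => min (lam * π₀ (R x)) (π₀ (R x - δ')) := by
    exact (hR.integrable_comp_emb hRemb).mpr (key δ').1
  have hRint : (∫ x, min (lam * π₀ (R x)) (π₀ (R x - δ)))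
      = ∫ x, min (lam * π₀ x) (π₀ (x - δ)) := by
    exact hR.integral_comp hRemb fun z => min (lam * π₀ z) (π₀ (z - δ))
  have hRint' : (∫ x, min (lam * π₀ (R x)) (π₀ (R x - δ')))
      = ∫ x, min (lam * π₀ x) (π₀ (x - δ')) := by
    exact hR.integral_comp hRemb fun z => min (lam * π₀ z) (π₀ (z - δ'))
  have hmono := integral_mono_ae ((key δ').1.add hcomp') ((key δ).1.add hcomp) hae
  simp only [Pi.add_apply] at hmono
  rw [integral_add (key δ').1 hcomp', integral_add (key δ).1 hcomp, hRint, hRint'] at hmono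
  have hMM : (∫ x, min (lam * π₀ x) (π₀ (x - δ'))) ≤ ∫ x, min (lam * π₀ x) (π₀ (x - δ)) := by
    linarith
  rw [hD]
  dsimp only
  rw [(key δ).2, (key δ').2]
  linarith
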